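/- arXiv:0805.2020 — 4 statements merged into one kernel-verified Lean document; each statement's English description precedes it below -/
import Mathlib

section
/- For 2 < p < ∞ and β := (3^p - 1)^{1/p}, the cogenerator V = [[0, -β/3],[0,1/3]] of A = [[-1,β],[0,-2]] is a contraction on ℂ² with the ℓ^p norm, while the semigroup (e^{tA})_{t≥0} is not contractive on (ℂ², ‖·‖_p). -/
open NormedSpace

private lemma aux_exp_tA (β t : ℝ) :
    NormedSpace.exp (t • !![(-1 : ℂ), (β : ℂ); 0, -2]) =
      !![((Real.exp (-t) : ℝ) : ℂ),
          (β : ℂ) * (((Real.exp (-t) : ℝ) : ℂ) - ((Real.exp (-(2 * t)) : ℝ) : ℂ));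
         0, ((Real.exp (-(2 * t)) : ℝ) : ℂ)] := by
  set P : Matrix (Fin 2) (Fin 2) ℂ := !![1, -(β : ℂ); 0, 1] with hP
  have hPmul : P * !![1, (β : ℂ); 0, 1] = 1 := by
    simp [hP, Matrix.mul_fin_two, Matrix.one_fin_two]
  have hPinv : P⁻¹ = !![1, (β : ℂ); 0, 1] := Matrix.inv_eq_right_inv hPmul
  have hPunit : IsUnit P := by
    rw [Matrix.isUnit_iff_isUnit_det]
    simp [hP, Matrix.det_fin_two_of]
  have hdiag : Matrix.diagonal ![((-t : ℝ) : ℂ), ((-(2 * t) : ℝ) : ℂ)] =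
      !![((-t : ℝ) : ℂ), 0; 0, ((-(2 * t) : ℝ) : ℂ)] := by
    ext i j
    fin_cases i <;> fin_cases j <;> simp [Matrix.diagonal]
  have hD : t • !![(-1 : ℂ), (β : ℂ); 0, -2] =
      P * Matrix.diagonal ![((-t : ℝ) : ℂ), ((-(2 * t) : ℝ) : ℂ)] * P⁻¹ := by
    rw [hdiag, hPinv, hP, Matrix.mul_fin_two, Matrix.mul_fin_two]
    ext i j
    fin_cases i <;> fin_cases j <;> · push_cast; simp; try ring
  rw [hD, Matrix.exp_conj P _ hPunit, Matrix.exp_diagonal, hPinv]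
  have he : NormedSpace.exp ![((-t : ℝ) : ℂ), ((-(2 * t) : ℝ) : ℂ)] =
      ![((Real.exp (-t) : ℝ) : ℂ), ((Real.exp (-(2 * t)) : ℝ) : ℂ)] := by
    funext i
    fin_cases i <;>
      simp [Pi.coe_exp, ← Complex.exp_eq_exp_ℂ, Complex.ofReal_exp, Complex.ofReal_neg,
        Complex.ofReal_mul, Complex.ofReal_ofNat]
  rw [he]
  have hdiag2 : Matrix.diagonal ![((Real.exp (-t) : ℝ) : ℂ), ((Real.exp (-(2 * t)) : ℝ) : ℂ)] =
      !![((Real.exp (-t) : ℝ) : ℂ), 0; 0, ((Real.exp (-(2 * t)) : ℝ) : ℂ)] := by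
    ext i j
    fin_cases i <;> fin_cases j <;> simp [Matrix.diagonal]
  rw [hdiag2, hP, Matrix.mul_fin_two, Matrix.mul_fin_two]
  ext i j
  fin_cases i <;> fin_cases j <;> · push_cast; simp; try ring

private lemma aux_deriv_pos {f : ℝ → ℝ} {c : ℝ} (hf : HasDerivAt f c 0) (hc : 0 < c) :
    ∃ t : ℝ, 0 < t ∧ f 0 < f t := by
  have h := (hf.hasDerivWithinAt (s := Set.Ioi 0))
  rw [hasDerivWithinAt_iff_tendsto_slope] at h
  have hs : Set.Ioi (0:ℝ) \ {0} = Set.Ioi 0 := by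
    simp [Set.diff_singleton_eq_self]
  rw [hs] at h
  have hev : ∀ᶠ u in nhdsWithin (0:ℝ) (Set.Ioi 0), 0 < slope f 0 u :=
    h.eventually_const_lt hc
  have hmem : ∀ᶠ u in nhdsWithin (0:ℝ) (Set.Ioi 0), u ∈ Set.Ioi (0:ℝ) :=
    self_mem_nhdsWithin
  obtain ⟨t, hslope, ht⟩ := (hev.and hmem).exists
  refine ⟨t, ht, ?_⟩
  rw [slope_def_field] at hslope
  have ht0 : (0:ℝ) < t := ht
  have : 0 < f t - f 0 := by
    have h2 := mul_pos hslope ht0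
    rw [sub_zero, div_mul_cancel₀ _ ht0.ne'] at h2
    exact h2
  linarith

/-- For `2 < p < ∞` and `β := (3^p - 1)^{1/p}`, the cogenerator `V = [[0, -β/3],[0, 1/3]]`
of `A = [[-1, β],[0,-2]]` is a contraction on `(ℂ², ‖·‖_p)`, while the semigroup
`(e^{tA})_{t ≥ 0}` is not contractive on `(ℂ², ‖·‖_p)`. -/
theorem stmt_11 (p : ℝ) (hp : 2 < p) (β : ℝ) (hβ : β = (3 ^ p - 1) ^ (1 / p))
    (pnorm : (Fin 2 → ℂ) → ℝ)
    (hpnorm : ∀ x : Fin 2 → ℂ, pnorm x = (‖x 0‖ ^ p + ‖x 1‖ ^ p) ^ (1 / p)) :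
    (∀ x : Fin 2 → ℂ, pnorm ((!![(0 : ℂ), -(β : ℂ) / 3; 0, 1 / 3]).mulVec x) ≤ pnorm x) ∧
      ∃ t : ℝ, 0 < t ∧ ∃ x : Fin 2 → ℂ,
        pnorm x < pnorm ((NormedSpace.exp (t • !![(-1 : ℂ), (β : ℂ); 0, -2])).mulVec x) := by
  have hp0 : 0 < p := by linarith
  have h3p : (1 : ℝ) < 3 ^ p :=
    (Real.one_lt_rpow_iff_of_pos (by norm_num)).mpr (Or.inl ⟨by norm_num, hp0⟩)
  have hβp : β ^ p = 3 ^ p - 1 := by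
    rw [hβ, one_div, Real.rpow_inv_rpow (by linarith) hp0.ne']
  have hβpos : 0 < β := by
    rw [hβ]; exact Real.rpow_pos_of_pos (by linarith) _
  have h3ppos : (0 : ℝ) < 3 ^ p := by linarith
  constructor
  · intro x
    have h0 : (!![(0 : ℂ), -(β : ℂ) / 3; 0, 1 / 3]).mulVec x 0 = -(β : ℂ) / 3 * x 1 := by
      simp [Matrix.mulVec, dotProduct, Fin.sum_univ_two]
    have h1 : (!![(0 : ℂ), -(β : ℂ) / 3; 0, 1 / 3]).mulVec x 1 = 1 / 3 * x 1 := by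
      simp [Matrix.mulVec, dotProduct, Fin.sum_univ_two]
    rw [hpnorm, hpnorm, h0, h1]
    have n0 : ‖-(β : ℂ) / 3 * x 1‖ = β / 3 * ‖x 1‖ := by
      rw [norm_mul, norm_div, norm_neg, Complex.norm_real, Real.norm_eq_abs,
        abs_of_nonneg hβpos.le]
      norm_num
    have n1 : ‖(1 / 3 : ℂ) * x 1‖ = 1 / 3 * ‖x 1‖ := by
      rw [norm_mul]; norm_num
    rw [n0, n1]
    have key : (β / 3 * ‖x 1‖) ^ p + (1 / 3 * ‖x 1‖) ^ p = ‖x 1‖ ^ p := by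
      rw [Real.mul_rpow (by positivity) (norm_nonneg _),
        Real.mul_rpow (by positivity) (norm_nonneg _),
        Real.div_rpow hβpos.le (by norm_num), Real.div_rpow (by norm_num) (by norm_num),
        hβp, Real.one_rpow]
      field_simp
      ring
    rw [key]
    refine Real.rpow_le_rpow (by positivity) ?_ (by positivity)
    have := Real.rpow_nonneg (norm_nonneg (x 0)) p
    linarith
  · -- non-contractivity
    set g : ℝ → ℝ := fun t => β * (3 / 2 * Real.exp (-t) - Real.exp (-(2 * t))) with hgdef
    set f : ℝ → ℝ := fun t => g t ^ p + Real.exp (-(2 * t)) ^ p with hfdef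
    have hg1 : HasDerivAt (fun t : ℝ => Real.exp (-t)) (-1) 0 := by
      simpa using ((hasDerivAt_id (0 : ℝ)).neg).exp
    have hg2 : HasDerivAt (fun t : ℝ => Real.exp (-(2 * t))) (-2) 0 := by
      simpa using (((hasDerivAt_id (0 : ℝ)).const_mul (2 : ℝ)).neg).exp
    have hg : HasDerivAt g (β / 2) 0 := by
      have h := ((hg1.const_mul (3 / 2 : ℝ)).sub hg2).const_mul β
      refine h.congr_deriv ?_
      ring
    have hg0 : g 0 = β / 2 := by
      simp [hgdef]
      ring
    have hβ2 : (0 : ℝ) < β / 2 := by linarith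
    have hfg : HasDerivAt (fun t => g t ^ p) (β / 2 * p * (β / 2) ^ (p - 1)) 0 := by
      have h := hg.rpow_const (p := p) (Or.inl (by rw [hg0]; positivity))
      rw [hg0] at h
      exact h
    have hf2 : HasDerivAt (fun t => Real.exp (-(2 * t)) ^ p) ((-2) * p * 1 ^ (p - 1)) 0 := by
      have h := hg2.rpow_const (p := p) (Or.inl (by simp))
      simpa using h
    have hh : (β / 2) ^ (p - 1) * (β / 2) = (β / 2) ^ p := by
      rw [← Real.rpow_add_one hβ2.ne' (p - 1), sub_add_cancel]
    have hf : HasDerivAt f (p * ((β / 2) ^ p - 2)) 0 := by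
      have h := hfg.add hf2
      refine h.congr_deriv (Eq.symm ?_)
      rw [Real.one_rpow]
      linear_combination (-p) * hh
    have h2p : (0 : ℝ) < 2 ^ p := Real.rpow_pos_of_pos (by norm_num : (0:ℝ) < 2) p
    have hkey : (2:ℝ) * 2 ^ p < 3 ^ p - 1 := by
      have e3 : (3 : ℝ) ^ p = 3 ^ (p - 2) * 9 := by
        rw [show (9 : ℝ) = (3 : ℝ) ^ ((2 : ℕ) : ℝ) by rw [Real.rpow_natCast]; norm_num,
          ← Real.rpow_add (by norm_num : (0 : ℝ) < 3)]
        norm_num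
      have e2 : (2 : ℝ) ^ p = 2 ^ (p - 2) * 4 := by
        rw [show (4 : ℝ) = (2 : ℝ) ^ ((2 : ℕ) : ℝ) by rw [Real.rpow_natCast]; norm_num,
          ← Real.rpow_add (by norm_num : (0 : ℝ) < 2)]
        norm_num
      have hle : (2 : ℝ) ^ (p - 2) ≤ 3 ^ (p - 2) :=
        Real.rpow_le_rpow (by norm_num) (by norm_num) (by linarith)
      have hgt1 : 1 < (3 : ℝ) ^ (p - 2) :=
        (Real.one_lt_rpow_iff_of_pos (by norm_num)).mpr (Or.inl ⟨by norm_num, by linarith⟩)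
      linarith
    have hβ2p : 2 < (β / 2) ^ p := by
      rw [Real.div_rpow hβpos.le (by norm_num), hβp, lt_div_iff₀ h2p]
      linarith
    have hc : 0 < p * ((β / 2) ^ p - 2) := mul_pos hp0 (by linarith)
    obtain ⟨t, ht, hft⟩ := aux_deriv_pos hf hc
    refine ⟨t, ht, ![((β / 2 : ℝ) : ℂ), 1], ?_⟩
    rw [aux_exp_tA]
    have m0 : (!![((Real.exp (-t) : ℝ) : ℂ),
          (β : ℂ) * (((Real.exp (-t) : ℝ) : ℂ) - ((Real.exp (-(2 * t)) : ℝ) : ℂ));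
          0, ((Real.exp (-(2 * t)) : ℝ) : ℂ)]).mulVec ![((β / 2 : ℝ) : ℂ), 1] 0
        = ((g t : ℝ) : ℂ) := by
      simp [Matrix.mulVec, dotProduct, Fin.sum_univ_two, hgdef]
      push_cast
      ring
    have m1 : (!![((Real.exp (-t) : ℝ) : ℂ),
          (β : ℂ) * (((Real.exp (-t) : ℝ) : ℂ) - ((Real.exp (-(2 * t)) : ℝ) : ℂ));
          0, ((Real.exp (-(2 * t)) : ℝ) : ℂ)]).mulVec ![((β / 2 : ℝ) : ℂ), 1] 1
        = ((Real.exp (-(2 * t)) : ℝ) : ℂ) := by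
      simp [Matrix.mulVec, dotProduct, Fin.sum_univ_two]
    rw [hpnorm, hpnorm, m0, m1]
    have hgt0 : 0 ≤ g t := by
      have hab : Real.exp (-(2 * t)) ≤ Real.exp (-t) := Real.exp_le_exp.mpr (by linarith)
      have ha : 0 < Real.exp (-t) := Real.exp_pos _
      have : 0 ≤ 3 / 2 * Real.exp (-t) - Real.exp (-(2 * t)) := by nlinarith
      exact mul_nonneg hβpos.le this
    have nx0 : ‖(((β / 2 : ℝ)) : ℂ)‖ = β / 2 := by
      rw [Complex.norm_real, Real.norm_eq_abs, abs_of_nonneg hβ2.le]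
    have ngt : ‖((g t : ℝ) : ℂ)‖ = g t := by
      rw [Complex.norm_real, Real.norm_eq_abs, abs_of_nonneg hgt0]
    have nexp : ‖((Real.exp (-(2 * t)) : ℝ) : ℂ)‖ = Real.exp (-(2 * t)) := by
      rw [Complex.norm_real, Real.norm_eq_abs, abs_of_nonneg (Real.exp_pos _).le]
    simp only [Matrix.cons_val_zero, Matrix.cons_val_one, Matrix.head_cons]
    rw [nx0, ngt, nexp, norm_one]
    have e0 : (β / 2) ^ p + (1 : ℝ) ^ p = f 0 := by
      simp [hfdef, hg0]
    have e1 : g t ^ p + Real.exp (-(2 * t)) ^ p = f t := rfl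
    rw [e0, e1]
    have hf0 : 0 ≤ f 0 := by
      rw [← e0]
      positivity
    exact Real.rpow_lt_rpow hf0 hft (by positivity)
end

section
/- Let A = [[-1, β],[0,-2]] with 0 < β. Then A^{-1} = [[-1, -β/2],[0,-1/2]], and e^{tA^{-1}} = [[e^{-t}, β(e^{-t} - e^{-t/2})],[0, e^{-t/2}]]. The semigroup (e^{tA^{-1}})_{t≥0} is contractive on (ℂ², ‖·‖_∞) if and only if β ≤ 2. -/
open Matrix

private lemma stmt13_inv (β : ℝ) :
    (!![(-1 : ℂ), (β : ℂ); 0, -2])⁻¹ = !![(-1 : ℂ), -(β : ℂ) / 2; 0, -1 / 2] := by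
  apply Matrix.inv_eq_right_inv
  rw [Matrix.mul_fin_two, Matrix.one_fin_two]
  ext i j
  fin_cases i <;> fin_cases j <;> simp <;> ring

private lemma stmt13_exp (β t : ℝ) :
    NormedSpace.exp (t • !![(-1 : ℂ), -(β : ℂ) / 2; 0, -1 / 2]) =
      !![Complex.exp (-t), (β : ℂ) * (Complex.exp (-t) - Complex.exp (-(t / 2)));
         0, Complex.exp (-(t / 2))] := by
  have hU : (!![(1:ℂ), -β; 0, 1] * !![(1:ℂ), β; 0, 1]) = 1 := by
    rw [Matrix.mul_fin_two, Matrix.one_fin_two]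
    ext i j; fin_cases i <;> fin_cases j <;> simp
  have hU' : (!![(1:ℂ), β; 0, 1] * !![(1:ℂ), -β; 0, 1]) = 1 := by
    rw [Matrix.mul_fin_two, Matrix.one_fin_two]
    ext i j; fin_cases i <;> fin_cases j <;> simp
  set U : (Matrix (Fin 2) (Fin 2) ℂ)ˣ := ⟨!![(1:ℂ), -β; 0, 1], !![(1:ℂ), β; 0, 1], hU, hU'⟩
  have hdiag : Matrix.diagonal ![(-(t:ℂ)), (-(t/2 : ℂ))] = !![(-(t:ℂ)), 0; 0, (-(t/2 : ℂ))] := by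
    ext i j; fin_cases i <;> fin_cases j <;> simp [Matrix.diagonal]
  have hconj : (t • !![(-1 : ℂ), -(β : ℂ) / 2; 0, -1 / 2])
      = (U : Matrix (Fin 2) (Fin 2) ℂ) * (Matrix.diagonal ![(-(t:ℂ)), (-(t/2 : ℂ))])
        * ((U⁻¹ : (Matrix (Fin 2) (Fin 2) ℂ)ˣ) : Matrix (Fin 2) (Fin 2) ℂ) := by
    show _ = !![(1:ℂ), -β; 0, 1] * _ * (!![(1:ℂ), β; 0, 1])
    rw [hdiag, Matrix.mul_fin_two, Matrix.mul_fin_two]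
    ext i j
    fin_cases i <;> fin_cases j <;> simp [Complex.real_smul] <;> ring
  rw [hconj, Matrix.exp_units_conj U, Matrix.exp_diagonal]
  show !![(1:ℂ), -β; 0, 1] * _ * (!![(1:ℂ), β; 0, 1]) = _
  have hd : Matrix.diagonal (NormedSpace.exp ![(-(t:ℂ)), (-(t/2 : ℂ))])
      = !![Complex.exp (-(t:ℂ)), 0; 0, Complex.exp (-(t/2 : ℂ))] := by
    ext i j; fin_cases i <;> fin_cases j <;>
      simp [Matrix.diagonal, Pi.exp_def, ← Complex.exp_eq_exp_ℂ]
  rw [hd, Matrix.mul_fin_two, Matrix.mul_fin_two]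
  ext i j
  fin_cases i <;> fin_cases j <;> simp <;> ring

private lemma stmt13_key (β t : ℝ) (hβ : 0 < β) (hβ2 : β ≤ 2) (ht : 0 ≤ t) :
    Real.exp (-t) + β * (Real.exp (-(t/2)) - Real.exp (-t)) ≤ 1 := by
  have hsq : Real.exp (-t) = Real.exp (-(t/2)) * Real.exp (-(t/2)) := by
    rw [← Real.exp_add]; ring_nf
  have h1 : Real.exp (-(t/2)) ≤ 1 := Real.exp_le_one_iff.mpr (by linarith)
  have h0 : 0 < Real.exp (-(t/2)) := Real.exp_pos _
  set u := Real.exp (-(t/2))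
  rw [hsq]
  nlinarith [mul_nonneg (sub_nonneg.mpr h1) (by nlinarith : (0:ℝ) ≤ 1 + (1-β)*u)]

private lemma stmt13_bound (β t : ℝ) (hβ : 0 < β) (hβ2 : β ≤ 2) (ht : 0 ≤ t) :
    ‖LinearMap.toContinuousLinearMap
      ((!![Complex.exp (-t), (β : ℂ) * (Complex.exp (-t) - Complex.exp (-(t / 2)));
             0, Complex.exp (-(t / 2))]).mulVecLin)‖ ≤ 1 := by
  have key := stmt13_key β t hβ hβ2 ht
  have he1 : Complex.exp (-(t:ℂ)) = ((Real.exp (-t) : ℝ) : ℂ) := by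
    rw [Complex.ofReal_exp]; push_cast; ring_nf
  have he2 : Complex.exp (-((t:ℂ)/2)) = ((Real.exp (-(t/2)) : ℝ) : ℂ) := by
    rw [Complex.ofReal_exp]; push_cast; ring_nf
  have hle : Real.exp (-t) ≤ Real.exp (-(t/2)) := Real.exp_le_exp.mpr (by linarith)
  have h0 : (0:ℝ) < Real.exp (-t) := Real.exp_pos _
  apply ContinuousLinearMap.opNorm_le_bound _ zero_le_one
  intro v
  rw [one_mul]
  apply (pi_norm_le_iff_of_nonneg (norm_nonneg v)).mpr
  intro i
  have hv0 : ‖v 0‖ ≤ ‖v‖ := norm_le_pi_norm v 0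
  have hv1 : ‖v 1‖ ≤ ‖v‖ := norm_le_pi_norm v 1
  fin_cases i
  · simp only [LinearMap.coe_toContinuousLinearMap', Matrix.mulVecLin_apply, Matrix.mulVec,
      dotProduct, Fin.sum_univ_two, Matrix.cons_val', Matrix.cons_val_zero,
      Matrix.cons_val_one, Matrix.head_cons, Matrix.empty_val', Matrix.cons_val_fin_one,
      Matrix.head_fin_const, Fin.isValue, Fin.mk_one]
    calc ‖Complex.exp (-↑t) * v 0 + ↑β * (Complex.exp (-↑t) - Complex.exp (-(↑t/2))) * v 1‖
        ≤ ‖Complex.exp (-↑t) * v 0‖ + ‖↑β * (Complex.exp (-↑t) - Complex.exp (-(↑t/2))) * v 1‖ :=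
          norm_add_le _ _
      _ = Real.exp (-t) * ‖v 0‖ + (β * (Real.exp (-(t/2)) - Real.exp (-t))) * ‖v 1‖ := by
          rw [he1, he2, norm_mul, norm_mul, norm_mul, ← Complex.ofReal_sub]
          simp only [Complex.norm_real, Real.norm_eq_abs]
          rw [abs_of_pos h0, abs_of_pos hβ,
            abs_of_nonpos (by linarith : Real.exp (-t) - Real.exp (-(t/2)) ≤ 0)]
          ring
      _ ≤ Real.exp (-t) * ‖v‖ + (β * (Real.exp (-(t/2)) - Real.exp (-t))) * ‖v‖ := by
          have : 0 ≤ β * (Real.exp (-(t/2)) - Real.exp (-t)) := by nlinarith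
          gcongr
      _ = (Real.exp (-t) + β * (Real.exp (-(t/2)) - Real.exp (-t))) * ‖v‖ := by ring
      _ ≤ 1 * ‖v‖ := by gcongr
      _ = ‖v‖ := one_mul _
  · simp only [LinearMap.coe_toContinuousLinearMap', Matrix.mulVecLin_apply]
    have hcomp : (!![Complex.exp (-↑t), ↑β * (Complex.exp (-↑t) - Complex.exp (-(↑t/2)));
        0, Complex.exp (-(↑t/2))]).mulVec v 1 = Complex.exp (-((t:ℂ)/2)) * v 1 := by
      simp [Matrix.mulVec, dotProduct, Fin.sum_univ_two]
    simp only [Fin.mk_one]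
    rw [hcomp, norm_mul, he2, Complex.norm_real, Real.norm_eq_abs, abs_of_pos (Real.exp_pos _)]
    calc Real.exp (-(t/2)) * ‖v 1‖ ≤ 1 * ‖v‖ := by
          apply mul_le_mul (Real.exp_le_one_iff.mpr (by linarith)) hv1 (norm_nonneg _) zero_le_one
      _ = ‖v‖ := one_mul _

private lemma stmt13_necessary (β : ℝ) (hβ : 0 < β) (hβ2 : 2 < β)
    (H : ∀ t : ℝ, 0 ≤ t →
      ‖LinearMap.toContinuousLinearMap
        ((!![Complex.exp (-t), (β : ℂ) * (Complex.exp (-t) - Complex.exp (-(t / 2)));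
             0, Complex.exp (-(t / 2))]).mulVecLin)‖ ≤ 1) : False := by
  set u : ℝ := β / (2 * (β - 1)) with hu_def
  have hβ1 : (0:ℝ) < β - 1 := by linarith
  have hu0 : 0 < u := by positivity
  have hu1 : u < 1 := by
    rw [hu_def, div_lt_one (by positivity)]; linarith
  have hkey : 1 + u < β * u := by
    have : (β - 1) * u = β / 2 := by rw [hu_def]; field_simp
    nlinarith
  set t : ℝ := -2 * Real.log u with ht_def
  have ht : 0 < t := by
    have := Real.log_neg hu0 hu1
    rw [ht_def]; linarith
  have he2 : Real.exp (-(t/2)) = u := by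
    rw [ht_def]; rw [show -((-2 * Real.log u)/2) = Real.log u by ring, Real.exp_log hu0]
  have he1 : Real.exp (-t) = u * u := by
    have : -t = -(t/2) + -(t/2) := by ring
    rw [this, Real.exp_add, he2]
  have hL := H t ht.le
  set M : Matrix (Fin 2) (Fin 2) ℂ :=
    !![Complex.exp (-t), (β : ℂ) * (Complex.exp (-t) - Complex.exp (-(t / 2)));
       0, Complex.exp (-(t / 2))] with hM
  set v : Fin 2 → ℂ := ![1, -1] with hv_def
  have hvnorm : ‖v‖ ≤ 1 := by
    apply (pi_norm_le_iff_of_nonneg zero_le_one).mpr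
    intro i; fin_cases i <;> simp [hv_def]
  have hbound : ‖(LinearMap.toContinuousLinearMap M.mulVecLin) v‖ ≤ 1 := by
    calc ‖(LinearMap.toContinuousLinearMap M.mulVecLin) v‖
        ≤ ‖LinearMap.toContinuousLinearMap M.mulVecLin‖ * ‖v‖ :=
          ContinuousLinearMap.le_opNorm _ _
      _ ≤ 1 * 1 := mul_le_mul hL hvnorm (norm_nonneg _) zero_le_one
      _ = 1 := one_mul 1
  have hc0 : ‖(LinearMap.toContinuousLinearMap M.mulVecLin) v 0‖ ≤ 1 :=
    le_trans (norm_le_pi_norm _ 0) hbound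
  have hcomp : (LinearMap.toContinuousLinearMap M.mulVecLin) v 0
      = ((u * u + β * (u - u * u) : ℝ) : ℂ) := by
    simp only [LinearMap.coe_toContinuousLinearMap', Matrix.mulVecLin_apply]
    have h1 : Complex.exp (-(t:ℂ)) = ((u * u : ℝ) : ℂ) := by
      rw [← he1, Complex.ofReal_exp]; push_cast; ring_nf
    have h2 : Complex.exp (-((t:ℂ)/2)) = ((u : ℝ) : ℂ) := by
      rw [← he2, Complex.ofReal_exp]; push_cast; ring_nf
    simp [hM, hv_def, Matrix.mulVec, dotProduct, Fin.sum_univ_two, h1, h2]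
    ring
  rw [hcomp, Complex.norm_real, Real.norm_eq_abs,
    abs_of_pos (by nlinarith : (0:ℝ) < u * u + β * (u - u * u))] at hc0
  nlinarith [hc0, hkey, hu0, hu1]

/-- For `A = [[-1, β],[0,-2]]` with `β > 0`: `A⁻¹ = [[-1, -β/2],[0, -1/2]]`,
`e^{tA⁻¹} = [[e^{-t}, β(e^{-t} - e^{-t/2})],[0, e^{-t/2}]]`, and the semigroup
`(e^{tA⁻¹})_{t ≥ 0}` is contractive on `(ℂ², ‖·‖_∞)` if and only if `β ≤ 2`. -/
theorem stmt_13 (β : ℝ) (hβ : 0 < β) :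
    (!![(-1 : ℂ), (β : ℂ); 0, -2])⁻¹ = !![(-1 : ℂ), -(β : ℂ) / 2; 0, -1 / 2] ∧
      (∀ t : ℝ, 0 ≤ t →
        NormedSpace.exp (t • !![(-1 : ℂ), -(β : ℂ) / 2; 0, -1 / 2]) =
          !![Complex.exp (-t), (β : ℂ) * (Complex.exp (-t) - Complex.exp (-(t / 2)));
             0, Complex.exp (-(t / 2))]) ∧
      ((∀ t : ℝ, 0 ≤ t →
          ‖LinearMap.toContinuousLinearMap
            ((NormedSpace.exp (t • !![(-1 : ℂ), -(β : ℂ) / 2; 0, -1 / 2])).mulVecLin)‖ ≤ 1)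
        ↔ β ≤ 2) := by
  refine ⟨stmt13_inv β, fun t _ => stmt13_exp β t, ?_⟩
  constructor
  · intro H
    by_contra h
    push_neg at h
    refine stmt13_necessary β hβ h (fun t ht => ?_)
    have := H t ht
    rwa [stmt13_exp β t] at this
  · intro hβ2 t ht
    rw [stmt13_exp β t]
    exact stmt13_bound β t hβ hβ2 ht
end

section
/- (Carlson's inequality) For a measurable function f : (0,∞) → ℂ with f ∈ L²(0,∞) and t·f(t) ∈ L²(0,∞), both nonzero, one has ‖f‖_{L¹(0,∞)} ≤ 2 √(‖f‖_{L²} · ‖t f‖_{L²}). -/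
open MeasureTheory

/-- Carlson's inequality: for measurable `f : (0,∞) → ℂ` with `f ∈ L²(0,∞)` and
`t f(t) ∈ L²(0,∞)`, both nonzero, one has
`‖f‖_{L¹} ≤ 2 √(‖f‖_{L²} · ‖t f‖_{L²})`. -/
theorem stmt_14 (f : ℝ → ℂ)
    (hmeas : AEStronglyMeasurable f (volume.restrict (Set.Ioi 0)))
    (hf2 : IntegrableOn (fun t => ‖f t‖ ^ 2) (Set.Ioi 0))
    (htf2 : IntegrableOn (fun t => t ^ 2 * ‖f t‖ ^ 2) (Set.Ioi 0))
    (h1 : (∫ t in Set.Ioi (0 : ℝ), ‖f t‖ ^ 2) ≠ 0)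
    (h2 : (∫ t in Set.Ioi (0 : ℝ), t ^ 2 * ‖f t‖ ^ 2) ≠ 0) :
    (∫ t in Set.Ioi (0 : ℝ), ‖f t‖) ≤
      2 * Real.sqrt ((∫ t in Set.Ioi (0 : ℝ), ‖f t‖ ^ 2) ^ ((1 : ℝ) / 2) *
        (∫ t in Set.Ioi (0 : ℝ), t ^ 2 * ‖f t‖ ^ 2) ^ ((1 : ℝ) / 2)) := by
  set A := ∫ t in Set.Ioi (0 : ℝ), ‖f t‖ ^ 2 with hA_def
  set B := ∫ t in Set.Ioi (0 : ℝ), t ^ 2 * ‖f t‖ ^ 2 with hB_def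
  have hA : 0 < A :=
    lt_of_le_of_ne (integral_nonneg fun t => sq_nonneg _) (Ne.symm h1)
  have hB : 0 < B :=
    lt_of_le_of_ne (integral_nonneg fun t => mul_nonneg (sq_nonneg _) (sq_nonneg _)) (Ne.symm h2)
  set c := Real.sqrt (B / A) with hc_def
  have hc : 0 < c := Real.sqrt_pos.mpr (div_pos hB hA)
  set μ := Real.sqrt (A / c) with hμ_def
  have hμ : 0 < μ := Real.sqrt_pos.mpr (div_pos hA hc)
  set ν := Real.sqrt (c * B) with hν_def
  have hν : 0 < ν := Real.sqrt_pos.mpr (mul_pos hc hB)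
  -- pointwise AM-GM bounds
  have hpt1 : ∀ t, ‖f t‖ ≤ (μ + ‖f t‖ ^ 2 / μ) / 2 := by
    intro t
    rw [le_div_iff₀ (by norm_num : (0 : ℝ) < 2), ← sub_nonneg]
    have h : μ + ‖f t‖ ^ 2 / μ - ‖f t‖ * 2 = (μ - ‖f t‖) ^ 2 / μ := by
      field_simp
      ring
    rw [h]
    exact div_nonneg (sq_nonneg _) hμ.le
  have hpt2 : ∀ t ∈ Set.Ioi c, ‖f t‖ ≤ (ν * (t ^ 2)⁻¹ + t ^ 2 * ‖f t‖ ^ 2 / ν) / 2 := by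
    intro t ht
    have htpos : 0 < t := hc.trans ht
    have htne : t ≠ 0 := htpos.ne'
    have hνne : ν ≠ 0 := hν.ne'
    rw [le_div_iff₀ (by norm_num : (0 : ℝ) < 2), ← sub_nonneg]
    have h : ν * (t ^ 2)⁻¹ + t ^ 2 * ‖f t‖ ^ 2 / ν - ‖f t‖ * 2
        = (ν - t ^ 2 * ‖f t‖) ^ 2 / (ν * t ^ 2) := by
      field_simp
      ring
    rw [h]
    exact div_nonneg (sq_nonneg _) (mul_pos hν (pow_pos htpos 2)).le
  -- integrability of the majorants
  have hf2' : IntegrableOn (fun t => ‖f t‖ ^ 2) (Set.Ioc 0 c) :=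
    hf2.mono_set Set.Ioc_subset_Ioi_self
  have htf2' : IntegrableOn (fun t => t ^ 2 * ‖f t‖ ^ 2) (Set.Ioi c) :=
    htf2.mono_set (Set.Ioi_subset_Ioi hc.le)
  have hconst : IntegrableOn (fun _ : ℝ => μ) (Set.Ioc 0 c) :=
    integrableOn_const measure_Ioc_lt_top.ne
  have hg1int : IntegrableOn (fun t => (μ + ‖f t‖ ^ 2 / μ) / 2) (Set.Ioc 0 c) :=
    (hconst.add (hf2'.div_const μ)).div_const 2
  have hinv : IntegrableOn (fun t : ℝ => (t ^ 2)⁻¹) (Set.Ioi c) := by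
    have := integrableOn_Ioi_rpow_of_lt (show (-2 : ℝ) < -1 by norm_num) hc
    refine this.congr_fun (fun x hx => ?_) measurableSet_Ioi
    have hx0 : 0 < x := hc.trans hx
    show x ^ (-2 : ℝ) = (x ^ 2)⁻¹
    rw [Real.rpow_neg hx0.le, show (2 : ℝ) = ((2 : ℕ) : ℝ) by norm_num,
      Real.rpow_natCast]
  have hg2int : IntegrableOn (fun t => (ν * (t ^ 2)⁻¹ + t ^ 2 * ‖f t‖ ^ 2 / ν) / 2)
      (Set.Ioi c) :=
    ((hinv.const_mul ν).add (htf2'.div_const ν)).div_const 2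
  -- integrability of ‖f‖ on both pieces
  have hmeas1 : AEStronglyMeasurable (fun t => ‖f t‖) (volume.restrict (Set.Ioc 0 c)) :=
    (hmeas.norm).mono_measure (Measure.restrict_mono Set.Ioc_subset_Ioi_self le_rfl)
  have hmeas2 : AEStronglyMeasurable (fun t => ‖f t‖) (volume.restrict (Set.Ioi c)) :=
    (hmeas.norm).mono_measure (Measure.restrict_mono (Set.Ioi_subset_Ioi hc.le) le_rfl)
  have hifc1 : IntegrableOn (fun t => ‖f t‖) (Set.Ioc 0 c) := by
    refine hg1int.mono' hmeas1 ?_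
    exact ae_of_all _ fun t => by
      simpa [abs_of_nonneg (norm_nonneg (f t))] using hpt1 t
  have hifc2 : IntegrableOn (fun t => ‖f t‖) (Set.Ioi c) := by
    refine hg2int.mono' hmeas2 ?_
    filter_upwards [self_mem_ae_restrict (measurableSet_Ioi : MeasurableSet (Set.Ioi c))]
      with t ht
    simpa [abs_of_nonneg (norm_nonneg (f t))] using hpt2 t ht
  -- split the integral
  have hsplit : (∫ t in Set.Ioi (0 : ℝ), ‖f t‖)
      = (∫ t in Set.Ioc 0 c, ‖f t‖) + ∫ t in Set.Ioi c, ‖f t‖ := by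
    rw [← setIntegral_union (Set.Ioc_disjoint_Ioi le_rfl) measurableSet_Ioi hifc1 hifc2,
      Set.Ioc_union_Ioi_eq_Ioi hc.le]
  -- bounds on each piece
  have hvol : (volume (Set.Ioc (0 : ℝ) c)).toReal = c := by
    rw [Real.volume_Ioc, ENNReal.toReal_ofReal (by linarith)]; ring
  have hA1 : (∫ t in Set.Ioc (0 : ℝ) c, ‖f t‖ ^ 2) ≤ A := by
    rw [hA_def]
    exact setIntegral_mono_set hf2 (ae_of_all _ fun t => sq_nonneg _)
      Set.Ioc_subset_Ioi_self.eventuallyLE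
  have hB1 : (∫ t in Set.Ioi c, t ^ 2 * ‖f t‖ ^ 2) ≤ B := by
    rw [hB_def]
    exact setIntegral_mono_set htf2 (ae_of_all _ fun t => mul_nonneg (sq_nonneg _) (sq_nonneg _))
      (Set.Ioi_subset_Ioi hc.le).eventuallyLE
  have hb1 : (∫ t in Set.Ioc (0 : ℝ) c, ‖f t‖) ≤ (μ * c + A / μ) / 2 := by
    calc (∫ t in Set.Ioc (0 : ℝ) c, ‖f t‖)
        ≤ ∫ t in Set.Ioc (0 : ℝ) c, (μ + ‖f t‖ ^ 2 / μ) / 2 :=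
          integral_mono hifc1 hg1int fun t => hpt1 t
      _ = ((∫ _t in Set.Ioc (0 : ℝ) c, μ) + (∫ t in Set.Ioc (0 : ℝ) c, ‖f t‖ ^ 2) / μ) / 2 := by
          rw [integral_div, integral_add hconst (hf2'.div_const μ), integral_div]
      _ = (μ * c + (∫ t in Set.Ioc (0 : ℝ) c, ‖f t‖ ^ 2) / μ) / 2 := by
          rw [setIntegral_const, measureReal_def, hvol, smul_eq_mul, mul_comm]
      _ ≤ (μ * c + A / μ) / 2 := by
          have h := (div_le_div_iff_of_pos_right hμ).mpr hA1
          linarith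
  have hintinv : (∫ t in Set.Ioi c, (t ^ 2)⁻¹) = 1 / c := by
    have := integral_Ioi_rpow_of_lt (show (-2 : ℝ) < -1 by norm_num) hc
    have heq : (∫ t in Set.Ioi c, (t ^ 2)⁻¹) = ∫ t in Set.Ioi c, t ^ (-2 : ℝ) := by
      refine setIntegral_congr_fun measurableSet_Ioi fun x hx => ?_
      have hx0 : 0 < x := hc.trans hx
      rw [Real.rpow_neg hx0.le, show (2 : ℝ) = ((2 : ℕ) : ℝ) by norm_num, Real.rpow_natCast]
    rw [heq, this]
    rw [show (-2 : ℝ) + 1 = -1 by norm_num, Real.rpow_neg_one]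
    field_simp
  have hb2 : (∫ t in Set.Ioi c, ‖f t‖) ≤ (ν * (1 / c) + B / ν) / 2 := by
    calc (∫ t in Set.Ioi c, ‖f t‖)
        ≤ ∫ t in Set.Ioi c, (ν * (t ^ 2)⁻¹ + t ^ 2 * ‖f t‖ ^ 2 / ν) / 2 := by
          refine setIntegral_mono_on hifc2 hg2int measurableSet_Ioi fun t ht => hpt2 t ht
      _ = (ν * (∫ t in Set.Ioi c, (t ^ 2)⁻¹) + (∫ t in Set.Ioi c, t ^ 2 * ‖f t‖ ^ 2) / ν) / 2 := by
          rw [integral_div, integral_add (hinv.const_mul ν) (htf2'.div_const ν),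
            integral_div, integral_const_mul]
      _ = (ν * (1 / c) + (∫ t in Set.Ioi c, t ^ 2 * ‖f t‖ ^ 2) / ν) / 2 := by rw [hintinv]
      _ ≤ (ν * (1 / c) + B / ν) / 2 := by
          have h := (div_le_div_iff_of_pos_right hν).mpr hB1
          linarith
  -- arithmetic conclusion
  have hAne : A ≠ 0 := hA.ne'
  have hcne : c ≠ 0 := hc.ne'
  have hμne : μ ≠ 0 := hμ.ne'
  have hνne : ν ≠ 0 := hν.ne'
  have hsA : Real.sqrt A * Real.sqrt A = A := Real.mul_self_sqrt hA.le
  have hsB : Real.sqrt B * Real.sqrt B = B := Real.mul_self_sqrt hB.le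
  have hsApos : 0 < Real.sqrt A := Real.sqrt_pos.mpr hA
  have hsBpos : 0 < Real.sqrt B := Real.sqrt_pos.mpr hB
  have hc2 : c ^ 2 = B / A := Real.sq_sqrt (div_pos hB hA).le
  have hc2' : c ^ 2 * A = B := by rw [hc2]; field_simp
  have hμ2 : μ ^ 2 * c = A := by
    rw [hμ_def, Real.sq_sqrt (div_pos hA hc).le]
    field_simp
  have hν2 : ν ^ 2 = c * B := Real.sq_sqrt (mul_pos hc hB).le
  have hAc : A * c = Real.sqrt A * Real.sqrt B := by
    have h : (A * c) ^ 2 = (Real.sqrt A * Real.sqrt B) ^ 2 := by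
      linear_combination A * hc2' - B * hsA - (Real.sqrt A * Real.sqrt A) * hsB
    have h1' : 0 ≤ A * c := (mul_pos hA hc).le
    have h2' : 0 ≤ Real.sqrt A * Real.sqrt B := (mul_pos hsApos hsBpos).le
    have := congrArg Real.sqrt h
    rwa [Real.sqrt_sq h1', Real.sqrt_sq h2'] at this
  have hBc : B / c = Real.sqrt A * Real.sqrt B := by
    rw [div_eq_iff hcne, ← hAc]
    linear_combination -hc2'
  have hμc : μ * c = Real.sqrt (Real.sqrt A * Real.sqrt B) := by
    rw [← hAc, show A * c = (μ * c) ^ 2 from by linear_combination (-c) * hμ2,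
      Real.sqrt_sq (mul_pos hμ hc).le]
  have hAμ : A / μ = μ * c := by
    rw [div_eq_iff hμne]
    linear_combination -hμ2
  have hνc : ν / c = Real.sqrt (Real.sqrt A * Real.sqrt B) := by
    rw [← hBc, show B / c = (ν / c) ^ 2 from by
      rw [div_pow, div_eq_div_iff hcne (pow_ne_zero 2 hcne)]
      linear_combination (-c) * hν2,
      Real.sqrt_sq (div_pos hν hc).le]
  have hBν : B / ν = ν / c := by
    rw [div_eq_div_iff hνne hcne]
    linear_combination -hν2
  have hRHS : (2 : ℝ) * Real.sqrt (A ^ ((1 : ℝ) / 2) * B ^ ((1 : ℝ) / 2))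
      = 2 * Real.sqrt (Real.sqrt A * Real.sqrt B) := by
    rw [← Real.sqrt_eq_rpow, ← Real.sqrt_eq_rpow]
  rw [hsplit, hRHS]
  have e1 : (μ * c + A / μ) / 2 = Real.sqrt (Real.sqrt A * Real.sqrt B) := by
    rw [hAμ, hμc]; ring
  have e2 : (ν * (1 / c) + B / ν) / 2 = Real.sqrt (Real.sqrt A * Real.sqrt B) := by
    rw [hBν, show ν * (1 / c) = ν / c from by ring, hνc]; ring
  linarith [hb1, hb2]
end

section
/- Let L¹_n denote the first generalized Laguerre polynomial, L¹_n(t) = Σ_{m=0}^n ((-1)^m/m!) · C(n+1, n-m) · t^m. Then the Laplace transform of the function t ↦ -2 L¹_{n-1}(2t) e^{-t} equals s ↦ ((s-1)/(s+1))ⁿ - 1 for Re s > -1 (for n ≥ 1). -/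
open MeasureTheory Set Filter Asymptotics Topology

lemma tendsto_pow_mul_exp_neg_mul (m : ℕ) {b : ℝ} (hb : 0 < b) :
    Tendsto (fun x : ℝ => x ^ m * Real.exp (-b * x)) atTop (𝓝 0) := by
  have h := ((Real.tendsto_pow_mul_exp_neg_atTop_nhds_zero m).comp
    (tendsto_id.const_mul_atTop hb)).div_const (b ^ m)
  rw [zero_div] at h
  refine h.congr fun x => ?_
  have hb' : (b : ℝ) ^ m ≠ 0 := (pow_pos hb m).ne'
  field_simp [Function.comp, mul_pow]
  simp only [Function.comp_apply, id]
  ring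

lemma integrableOn_pow_mul_exp_real (m : ℕ) {b : ℝ} (hb : 0 < b) :
    IntegrableOn (fun t : ℝ => t ^ m * Real.exp (-b * t)) (Ioi 0) := by
  apply integrable_of_isBigO_exp_neg (b := b / 2) (by linarith)
  · exact ((continuous_pow m).mul (Real.continuous_exp.comp
      (continuous_const.mul continuous_id))).continuousOn
  · apply IsLittleO.isBigO
    rw [isLittleO_iff_tendsto fun x h => absurd h (Real.exp_ne_zero _)]
    refine (tendsto_pow_mul_exp_neg_mul m (b := b / 2) (by linarith)).congr fun x => ?_
    rw [mul_div_assoc, ← Real.exp_sub, show -b * x - -(b/2) * x = -(b/2) * x by ring]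

lemma integrableOn_cpow_exp (m : ℕ) {a : ℂ} (ha : 0 < a.re) :
    IntegrableOn (fun t : ℝ => (t : ℂ) ^ m * Complex.exp (-a * t)) (Ioi 0) := by
  have hre := integrableOn_pow_mul_exp_real m ha
  refine Integrable.mono' hre ?_ ?_
  · exact ((Complex.continuous_ofReal.pow m).mul (Complex.continuous_exp.comp
      (continuous_const.mul Complex.continuous_ofReal))).aestronglyMeasurable
  · filter_upwards [ae_restrict_mem measurableSet_Ioi] with t ht
    rw [norm_mul, norm_pow, Complex.norm_real, Complex.norm_exp]
    simp [Real.norm_eq_abs, abs_of_pos (mem_Ioi.mp ht)]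

lemma tendsto_cpow_exp_zero (k : ℕ) {a : ℂ} (ha : 0 < a.re) :
    Tendsto (fun t : ℝ => (t : ℂ) ^ k * Complex.exp (-a * t)) atTop (𝓝 0) := by
  rw [tendsto_zero_iff_norm_tendsto_zero]
  refine (tendsto_pow_mul_exp_neg_mul k ha).congr' ?_
  filter_upwards [eventually_gt_atTop 0] with t ht
  rw [norm_mul, norm_pow, Complex.norm_real, Complex.norm_exp]
  simp [Real.norm_eq_abs, abs_of_pos ht]

lemma integral_pow_mul_exp (m : ℕ) {a : ℂ} (ha : 0 < a.re) :
    ∫ t in Ioi (0:ℝ), (t : ℂ) ^ m * Complex.exp (-a * t) = m.factorial / a ^ (m + 1) := by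
  have ha0 : a ≠ 0 := fun h => by simp [h] at ha
  induction m with
  | zero =>
    have hderiv : ∀ x ∈ Ici (0:ℝ), HasDerivAt (fun t : ℝ => -Complex.exp (-a * t) / a)
        ((x:ℂ) ^ 0 * Complex.exp (-a * x)) x := by
      intro x _
      have h2 : HasDerivAt (fun t : ℝ => Complex.exp (-a * t)) (-a * Complex.exp (-a * x)) x := by
        have : HasDerivAt (fun z : ℂ => Complex.exp (-a * z)) (-a * Complex.exp (-a * x)) (x:ℂ) := by
          simpa [mul_comm] using (((hasDerivAt_id (x:ℂ)).const_mul (-a)).cexp)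
        exact this.comp_ofReal
      have := (h2.neg).div_const a
      convert this using 1
      · rfl
      · rfl
      rw [eq_div_iff ha0]
      ring
    have hlim : Tendsto (fun t : ℝ => -Complex.exp (-a * t) / a) atTop (𝓝 0) := by
      have := ((tendsto_cpow_exp_zero 0 ha).neg).div_const a
      simp only [pow_zero, one_mul] at this
      simpa using this
    have key := integral_Ioi_of_hasDerivAt_of_tendsto' hderiv
      (by simpa using integrableOn_cpow_exp 0 ha) hlim
    simp only [Complex.ofReal_zero, mul_zero, Complex.exp_zero] at key
    rw [key]
    simp [Nat.factorial]
    ring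
  | succ m ih =>
    set F : ℝ → ℂ := fun t => -((t:ℂ) ^ (m+1) * Complex.exp (-a * t)) / a with hF
    have hderiv : ∀ x ∈ Ici (0:ℝ), HasDerivAt F
        ((x:ℂ) ^ (m+1) * Complex.exp (-a * x)
          - (((m:ℂ)+1)/a) * ((x:ℂ) ^ m * Complex.exp (-a * x))) x := by
      intro x _
      have h1 : HasDerivAt (fun t : ℝ => (t:ℂ) ^ (m+1)) (((m:ℂ)+1) * (x:ℂ) ^ m) x := by
        have := (hasDerivAt_pow (m+1) (x:ℂ)).comp_ofReal
        simpa using this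
      have h2 : HasDerivAt (fun t : ℝ => Complex.exp (-a * t)) (-a * Complex.exp (-a * x)) x := by
        have : HasDerivAt (fun z : ℂ => Complex.exp (-a * z)) (-a * Complex.exp (-a * x)) (x:ℂ) := by
          simpa [mul_comm] using (((hasDerivAt_id (x:ℂ)).const_mul (-a)).cexp)
        exact this.comp_ofReal
      have := ((h1.mul h2).neg).div_const a
      convert this using 1
      · rfl
      · rfl
      have hinv : a * a⁻¹ = 1 := mul_inv_cancel₀ ha0
      rw [eq_div_iff ha0]
      linear_combination (-((m:ℂ)+1) * (x:ℂ)^m * Complex.exp (-a * x)) * hinv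
    have hint : IntegrableOn (fun x : ℝ => (x:ℂ) ^ (m+1) * Complex.exp (-a * x)
        - (((m:ℂ)+1)/a) * ((x:ℂ) ^ m * Complex.exp (-a * x))) (Ioi 0) :=
      (integrableOn_cpow_exp (m+1) ha).sub ((integrableOn_cpow_exp m ha).const_mul _)
    have hlim : Tendsto F atTop (𝓝 0) := by
      have := ((tendsto_cpow_exp_zero (m+1) ha).neg).div_const a
      simpa [hF, neg_mul] using this
    have key := integral_Ioi_of_hasDerivAt_of_tendsto' hderiv hint hlim
    have hF0 : F 0 = 0 := by simp [hF]
    rw [hF0, sub_zero] at key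
    rw [integral_sub (integrableOn_cpow_exp (m+1) ha)
      ((integrableOn_cpow_exp m ha).const_mul _), MeasureTheory.integral_const_mul, ih, sub_eq_zero] at key
    rw [key, Nat.factorial_succ]
    push_cast
    ring

/-- The first generalised Laguerre polynomial
`L¹_n(t) = ∑_{m=0}^n ((-1)^m/m!) C(n+1, n-m) t^m`. -/
noncomputable def laguerre1 (n : ℕ) (t : ℝ) : ℝ :=
  ∑ m ∈ Finset.range (n + 1),
    (-1 : ℝ) ^ m / (Nat.factorial m) * ((n + 1).choose (n - m)) * t ^ m

/-- For `n ≥ 1`, the Laplace transform of `t ↦ -2 L¹_{n-1}(2t) e^{-t}` is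
`s ↦ ((s-1)/(s+1))ⁿ - 1` for `Re s > -1`. -/
theorem stmt_18 (n : ℕ) (hn : 1 ≤ n) (s : ℂ) (hs : -1 < s.re) :
    (∫ t in Set.Ioi (0 : ℝ),
        Complex.exp (-s * t) * (-2 * (laguerre1 (n - 1) (2 * t) : ℝ) * Real.exp (-t))) =
      ((s - 1) / (s + 1)) ^ n - 1 := by
  have ha : 0 < (s + 1).re := by
    rw [Complex.add_re, Complex.one_re]; linarith
  have ha0 : s + 1 ≠ 0 := fun h => by simp [h] at ha
  have hn1 : n - 1 + 1 = n := Nat.succ_pred_eq_of_pos hn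
  set c : ℕ → ℂ := fun m =>
    -2 * ((-1 : ℂ) ^ m / (Nat.factorial m) * (n.choose (n - 1 - m)) * 2 ^ m) with hc
  have hrw : ∀ t : ℝ,
      Complex.exp (-s * t) * (-2 * (laguerre1 (n - 1) (2 * t) : ℝ) * Real.exp (-t)) =
      ∑ m ∈ Finset.range n, c m * ((t : ℂ) ^ m * Complex.exp (-(s + 1) * t)) := by
    intro t
    have hexp : Complex.exp (-s * t) * (Real.exp (-t) : ℝ) = Complex.exp (-(s + 1) * t) := by
      rw [Complex.ofReal_exp, ← Complex.exp_add]
      congr 1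
      push_cast
      ring
    unfold laguerre1
    rw [hn1]
    push_cast
    rw [Finset.mul_sum, Finset.sum_mul, Finset.mul_sum]
    refine Finset.sum_congr rfl fun m hm => ?_
    rw [← hexp]
    push_cast
    ring
  simp_rw [hrw]
  rw [MeasureTheory.integral_finset_sum _ fun m _ =>
    ((integrableOn_cpow_exp m ha).const_mul (c m))]
  simp_rw [MeasureTheory.integral_const_mul, integral_pow_mul_exp _ ha]
  have hsum : ∀ m ∈ Finset.range n,
      c m * ((Nat.factorial m : ℂ) / (s + 1) ^ (m + 1)) =
      (-2 / (s + 1)) ^ (m + 1) * (n.choose (m + 1)) := by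
    intro m hm
    rw [Finset.mem_range] at hm
    have hch : n - 1 - m = n - (m + 1) := by omega
    have hch2 : n.choose (n - (m + 1)) = n.choose (m + 1) := Nat.choose_symm hm
    rw [hc]
    push_cast [hch, hch2]
    have hfac : (Nat.factorial m : ℂ) ≠ 0 := by exact_mod_cast (Nat.factorial_pos m).ne'
    rw [div_pow, show (-2 : ℂ) = (-1) * 2 from by norm_num, mul_pow]
    field_simp
    ring
  rw [Finset.sum_congr rfl hsum]
  have hx : (s - 1) / (s + 1) = -2 / (s + 1) + 1 := by
    field_simp
    ring
  rw [hx, add_pow]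
  rw [Finset.sum_range_succ']
  simp only [pow_zero, one_mul, one_pow, Nat.choose_zero_right, Nat.cast_one, mul_one]
  rw [add_sub_cancel_right]
end
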